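/- For all nonnegative integers n and r, the number of partitions of n whose smallest even positive integer not appearing as a part equals 2r+2 is equal to the coefficient of q^n in q^{r(r+1)}/∏_{m≥1, m≠2r+2}(1-q^m). -/

import Mathlib

open PowerSeries Finset

noncomputable def qPoch (n : ℕ) : PowerSeries ℚ :=
  ∏ k ∈ Finset.range n, (1 - (X : PowerSeries ℚ) ^ (k + 1))

noncomputable def gauss (L : ℕ) (s : ℤ) : PowerSeries ℚ :=
  if 0 ≤ s ∧ s ≤ (L : ℤ) then
    qPoch L * (qPoch s.toNat)⁻¹ * (qPoch (L - s.toNat))⁻¹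
  else 0
/-- The smallest positive odd integer that is not a part of `p`. -/
noncomputable def mexOdd {n : ℕ} (p : n.Partition) : ℕ :=
  sInf {m : ℕ | m % 2 = 1 ∧ m ∉ p.parts}

/-- The smallest positive even integer that is not a part of `p`. -/
noncomputable def mexEven {n : ℕ} (p : n.Partition) : ℕ :=
  sInf {m : ℕ | 0 < m ∧ m % 2 = 0 ∧ m ∉ p.parts}

noncomputable def geomS (m : ℕ) : PowerSeries ℚ :=
  PowerSeries.mk fun k => if m ∣ k then 1 else 0

lemma geomS_mul (m : ℕ) (hm : 0 < m) :
    ((1 : PowerSeries ℚ) - X ^ m) * geomS m = 1 := by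
  ext k
  rw [sub_mul, one_mul, map_sub, coeff_X_pow_mul', PowerSeries.coeff_one, geomS, coeff_mk]
  rcases Nat.eq_zero_or_pos k with rfl | hk
  · simp [hm.ne']
  · rw [if_neg hk.ne']
    by_cases h1 : m ∣ k
    · have h2 : m ≤ k := Nat.le_of_dvd hk h1
      rw [if_pos h1, if_pos h2, coeff_mk, if_pos (Nat.dvd_sub h1 dvd_rfl)]
      ring
    · rw [if_neg h1]
      by_cases h2 : m ≤ k
      · rw [if_pos h2, coeff_mk,
          if_neg (fun h3 => h1 ((Nat.sub_add_cancel h2) ▸ Nat.dvd_add h3 dvd_rfl))]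
        ring
      · rw [if_neg h2]; ring

lemma prod_inv_eq (S : Finset ℕ) (hS : ∀ m ∈ S, 0 < m) :
    (∏ m ∈ S, ((1 : PowerSeries ℚ) - X ^ m))⁻¹ = ∏ m ∈ S, geomS m := by
  rw [PowerSeries.inv_eq_iff_mul_eq_one]
  · rw [← Finset.prod_mul_distrib]
    rw [Finset.prod_congr rfl fun m hm => mul_comm (geomS m) _ ▸ geomS_mul m (hS m hm)]
    exact Finset.prod_const_one
  · rw [map_prod]
    rw [Finset.prod_congr rfl (g := fun _ => (1:ℚ)) fun m hm => by
      simp [(hS m hm).ne']]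
    simp

lemma coeff_prod_geomS (S : Finset ℕ) (d : ℕ) :
    PowerSeries.coeff d (∏ m ∈ S, geomS m) =
      (((S.finsuppAntidiag d).filter (fun l => ∀ m ∈ S, m ∣ l m)).card : ℚ) := by
  classical
  rw [PowerSeries.coeff_prod]
  have h : ∀ l ∈ S.finsuppAntidiag d,
      ∏ m ∈ S, PowerSeries.coeff (l m) (geomS m)
        = if (∀ m ∈ S, m ∣ l m) then (1 : ℚ) else 0 := by
    intro l _
    simp only [geomS, coeff_mk]
    by_cases h : ∀ m ∈ S, m ∣ l m
    · rw [if_pos h]; exact Finset.prod_eq_one fun m hm => if_pos (h m hm)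
    · rw [if_neg h]
      push_neg at h; obtain ⟨m, hm, hdvd⟩ := h
      exact Finset.prod_eq_zero hm (if_neg hdvd)
  rw [Finset.sum_congr rfl h, Finset.sum_boole]

lemma mexEven_eq_iff {n : ℕ} (p : n.Partition) (r : ℕ) :
    mexEven p = 2 * r + 2 ↔
      ((2 * r + 2) ∉ p.parts ∧ ∀ i, 1 ≤ i → i ≤ r → (2 * i) ∈ p.parts) := by
  constructor
  · intro h
    have hne : {m : ℕ | 0 < m ∧ m % 2 = 0 ∧ m ∉ p.parts}.Nonempty := by
      by_contra hne
      rw [Set.not_nonempty_iff_eq_empty] at hne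
      rw [mexEven, hne, Nat.sInf_empty] at h
      omega
    have hmem := Nat.sInf_mem hne
    rw [mexEven] at h
    rw [h] at hmem
    refine ⟨hmem.2.2, fun i h1 h2 => ?_⟩
    by_contra hmem'
    have hlt : 2 * i < sInf {m : ℕ | 0 < m ∧ m % 2 = 0 ∧ m ∉ p.parts} := by omega
    exact Nat.notMem_of_lt_sInf hlt ⟨by omega, by omega, hmem'⟩
  · rintro ⟨h1, h2⟩
    have hmem : (2 * r + 2) ∈ {m : ℕ | 0 < m ∧ m % 2 = 0 ∧ m ∉ p.parts} :=
      ⟨by omega, by omega, h1⟩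
    have hlb : ∀ m ∈ {m : ℕ | 0 < m ∧ m % 2 = 0 ∧ m ∉ p.parts}, 2 * r + 2 ≤ m := by
      rintro m ⟨hm0, hm2, hmp⟩
      by_contra hlt
      push_neg at hlt
      have hm : m = 2 * (m / 2) := by omega
      exact hmp (hm ▸ h2 (m / 2) (by omega) (by omega))
    exact le_antisymm (Nat.sInf_le hmem) (hlb _ (Nat.sInf_mem ⟨_, hmem⟩))

lemma sum_two_icc (r : ℕ) : ∑ i ∈ Finset.Icc 1 r, 2 * i = r * (r + 1) := by
  induction r with
  | zero => simp
  | succ k ih => rw [Finset.sum_Icc_succ_top (by omega), ih]; ring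


/-- The number of partitions of `n` whose smallest even positive non-part equals `2r+2`
equals the coefficient of `q^n` in `q^{r(r+1)} / ∏_{m ≥ 1, m ≠ 2r+2} (1 - q^m)`. -/
theorem stmt1 (n r : ℕ) :
    (Nat.card {p : n.Partition // mexEven p = 2 * r + 2} : ℚ) =
      PowerSeries.coeff n ((X : PowerSeries ℚ) ^ (r * (r + 1)) *
        (∏ m ∈ (Finset.Icc 1 n).erase (2 * r + 2),
          (1 - (X : PowerSeries ℚ) ^ m))⁻¹) := by
  classical
  set S : Finset ℕ := (Finset.Icc 1 n).erase (2 * r + 2) with hSdef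
  have hSpos : ∀ m ∈ S, 0 < m := fun m hm =>
    (Finset.mem_Icc.1 (Finset.mem_of_mem_erase hm)).1
  set E : Finset ℕ := (Finset.Icc 1 r).image (fun i => 2 * i) with hEdef
  have hmemE : ∀ m, m ∈ E ↔ ∃ i, (1 ≤ i ∧ i ≤ r) ∧ 2 * i = m := by
    intro m; simp [hEdef, Finset.mem_image, Finset.mem_Icc]
  have hEsum : ∑ m ∈ E, m = r * (r + 1) := by
    rw [hEdef, Finset.sum_image (by intro a _ b _ h; simp only at h; omega)]
    exact sum_two_icc r
  have hptsub : ∀ p : n.Partition, p.parts.toFinset ⊆ Finset.Icc 1 n := by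
    intro p x hx
    rw [Multiset.mem_toFinset] at hx
    refine Finset.mem_Icc.2 ⟨p.parts_pos hx, ?_⟩
    calc x ≤ p.parts.sum := Multiset.single_le_sum (fun y _ => Nat.zero_le y) x hx
    _ = n := p.parts_sum
  have hcount : ∀ p : n.Partition, ∑ m ∈ Finset.Icc 1 n, p.parts.count m * m = n := by
    intro p
    calc ∑ m ∈ Finset.Icc 1 n, p.parts.count m * m
        = ∑ m ∈ Finset.Icc 1 n, p.parts.count m • m := by simp [smul_eq_mul]
      _ = p.parts.sum := (Finset.sum_multiset_count_of_subset p.parts _ (hptsub p)).symm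
      _ = n := p.parts_sum
  -- E ⊆ parts for good partitions
  have hEsubp : ∀ p : n.Partition, mexEven p = 2 * r + 2 → E ⊆ p.parts.toFinset := by
    intro p hp m hm
    obtain ⟨i, ⟨hi1, hi2⟩, rfl⟩ := (hmemE m).1 hm
    exact Multiset.mem_toFinset.2 (((mexEven_eq_iff p r).1 hp).2 i hi1 hi2)
  by_cases han : r * (r + 1) ≤ n
  swap
  · -- degenerate case
    have hempty : ∀ p : n.Partition, mexEven p ≠ 2 * r + 2 := by
      intro p hp
      refine han ?_
      calc r * (r + 1) = ∑ m ∈ E, m := hEsum.symm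
        _ ≤ ∑ m ∈ E, p.parts.count m * m := Finset.sum_le_sum (fun m hm =>
            Nat.le_mul_of_pos_left m
              (Multiset.count_pos.2 (Multiset.mem_toFinset.1 (hEsubp p hp hm))))
        _ ≤ ∑ m ∈ Finset.Icc 1 n, p.parts.count m * m :=
            Finset.sum_le_sum_of_subset ((hEsubp p hp).trans (hptsub p))
        _ = n := hcount p
    have : IsEmpty {p : n.Partition // mexEven p = 2 * r + 2} :=
      ⟨fun ⟨p, hp⟩ => hempty p hp⟩
    rw [Nat.card_of_isEmpty, PowerSeries.coeff_X_pow_mul', if_neg han]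
    simp
  · -- main case
    rw [prod_inv_eq S hSpos, PowerSeries.coeff_X_pow_mul', if_pos han, coeff_prod_geomS]
    rw [Nat.card_eq_fintype_card, Fintype.card_subtype]
    norm_cast
    have hES : E ⊆ S := by
      intro m hm
      obtain ⟨i, ⟨hi1, hi2⟩, rfl⟩ := (hmemE m).1 hm
      have h2r : 2 * r ≤ r * (r + 1) := by nlinarith
      refine Finset.mem_erase.2 ⟨by omega, Finset.mem_Icc.2 ⟨by omega, by omega⟩⟩
    have hcountS : ∀ p : n.Partition, mexEven p = 2 * r + 2 →
        ∑ m ∈ S, p.parts.count m * m = n := by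
      intro p hp
      rw [hSdef, Finset.sum_erase _ (by
        rw [Multiset.count_eq_zero_of_notMem ((mexEven_eq_iff p r).1 hp).1, zero_mul])]
      exact hcount p
    have hfwd_sum : ∀ p : n.Partition, mexEven p = 2 * r + 2 →
        ∑ m ∈ S, (p.parts.count m - (if m ∈ E then 1 else 0)) * m = n - r * (r + 1) := by
      intro p hp
      have hkey : ∑ m ∈ S, ((p.parts.count m - (if m ∈ E then 1 else 0)) * m
          + (if m ∈ E then m else 0)) = n := by
        rw [Finset.sum_congr rfl (fun m hm => ?_)]
        · exact hcountS p hp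
        · by_cases hmE : m ∈ E
          · have hc : 1 ≤ p.parts.count m :=
              Multiset.count_pos.2 (Multiset.mem_toFinset.1 (hEsubp p hp hmE))
            obtain ⟨d, hd⟩ : ∃ d, p.parts.count m = d + 1 :=
              ⟨p.parts.count m - 1, by omega⟩
            simp [hmE, hd, add_mul]
          · simp [hmE]
      rw [Finset.sum_add_distrib] at hkey
      have h2 : ∑ m ∈ S, (if m ∈ E then m else 0) = r * (r + 1) := by
        rw [Finset.sum_ite_mem, Finset.inter_eq_right.2 hES, hEsum]
      omega
    -- the forward map
    set fwd : n.Partition → (ℕ →₀ ℕ) := fun p =>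
      Finsupp.onFinset S
        (fun m => if m ∈ S then (p.parts.count m - (if m ∈ E then 1 else 0)) * m else 0)
        (fun m h => by by_contra hm; simp [hm] at h) with hfwddef
    have hfwd_apply : ∀ p m, fwd p m =
        if m ∈ S then (p.parts.count m - (if m ∈ E then 1 else 0)) * m else 0 := by
      intro p m; rfl
    -- count of the backward multiset
    have hbcount : ∀ (l : ℕ →₀ ℕ) (x : ℕ),
        ((∑ m ∈ S, Multiset.replicate (l m / m) m) + E.val).count x
          = (if x ∈ S then l x / x else 0) + (if x ∈ E then 1 else 0) := by
      intro l x
      rw [Multiset.count_add, Multiset.count_sum']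
      congr 1
      · rw [Finset.sum_congr rfl (fun m _ => Multiset.count_replicate x m _)]
        simp
      · by_cases hx : x ∈ E
        · rw [if_pos hx]; exact Multiset.count_eq_one_of_mem E.nodup hx
        · rw [if_neg hx]; exact Multiset.count_eq_zero_of_notMem hx
    have hbsum : ∀ (l : ℕ →₀ ℕ), S.sum l = n - r * (r + 1) →
        (∀ m ∈ S, m ∣ l m) →
        ((∑ m ∈ S, Multiset.replicate (l m / m) m) + E.val).sum = n := by
      intro l hl1s hl2
      rw [Multiset.sum_add]
      have h1 : (∑ m ∈ S, Multiset.replicate (l m / m) m).sum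
          = ∑ m ∈ S, (Multiset.replicate (l m / m) m).sum := by
        rw [← Multiset.coe_sumAddMonoidHom, map_sum]
      have h2 : ∑ m ∈ S, (Multiset.replicate (l m / m) m).sum = n - r * (r + 1) := by
        rw [Finset.sum_congr rfl (fun m hm => ?_), hl1s]
        rw [Multiset.sum_replicate, smul_eq_mul, Nat.div_mul_cancel (hl2 m hm)]
      have h3 : E.val.sum = r * (r + 1) := by
        rw [← hEsum, Finset.sum_eq_multiset_sum, Multiset.map_id']
      rw [h1, h2, h3]; omega
    have hbpos : ∀ (l : ℕ →₀ ℕ) (x : ℕ),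
        x ∈ (∑ m ∈ S, Multiset.replicate (l m / m) m) + E.val → 0 < x := by
      intro l x hx
      have hc : 0 < ((∑ m ∈ S, Multiset.replicate (l m / m) m) + E.val).count x :=
        Multiset.count_pos.2 hx
      rw [hbcount] at hc
      by_cases h1 : x ∈ S
      · exact hSpos x h1
      · by_cases h2 : x ∈ E
        · exact hSpos x (hES h2)
        · simp [h1, h2] at hc
    have hno2r2 : ∀ (M : Multiset ℕ),
        (∀ x, M.count x = (if x ∈ S then x else 0)) → True := fun _ _ => trivial
    refine Finset.card_bij' (fun p _ => fwd p)
      (fun l hl => ⟨(∑ m ∈ S, Multiset.replicate (l m / m) m) + E.val,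
        fun {x} hx => hbpos l x hx,
        hbsum l (Finset.mem_finsuppAntidiag.1 (Finset.mem_filter.1 hl).1).1
          (Finset.mem_filter.1 hl).2⟩) ?_ ?_ ?_ ?_
    · -- fwd maps into the antidiagonal filter
      intro p hp
      have hpm : mexEven p = 2 * r + 2 := (Finset.mem_filter.1 hp).2
      refine Finset.mem_filter.2 ⟨Finset.mem_finsuppAntidiag.2 ⟨?_, ?_⟩, ?_⟩
      · rw [Finset.sum_congr rfl (fun m hm => by rw [hfwd_apply, if_pos hm])]
        exact hfwd_sum p hpm
      · exact Finsupp.support_onFinset_subset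
      · intro m hm
        rw [hfwd_apply, if_pos hm]
        exact dvd_mul_left m _
    · -- bwd maps into partitions with the right mex
      intro l hl
      refine Finset.mem_filter.2 ⟨Finset.mem_univ _, ?_⟩
      rw [mexEven_eq_iff]
      constructor
      · show 2 * r + 2 ∉ (∑ m ∈ S, Multiset.replicate (l m / m) m) + E.val
        rw [← Multiset.count_eq_zero, hbcount]
        have h1 : (2 * r + 2) ∉ S := fun h => (Finset.mem_erase.1 h).1 rfl
        have h2 : (2 * r + 2) ∉ E := by
          intro h
          obtain ⟨i, ⟨_, hi2⟩, hieq⟩ := (hmemE _).1 h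
          omega
        simp [h1, h2]
      · intro i hi1 hi2
        show 2 * i ∈ (∑ m ∈ S, Multiset.replicate (l m / m) m) + E.val
        rw [← Multiset.count_pos, hbcount]
        have h2 : (2 * i) ∈ E := (hmemE _).2 ⟨i, ⟨hi1, hi2⟩, rfl⟩
        simp [h2]
    · -- left inverse
      intro p hp
      have hpm : mexEven p = 2 * r + 2 := (Finset.mem_filter.1 hp).2
      obtain ⟨hno, hyes⟩ := (mexEven_eq_iff p r).1 hpm
      ext1
      show (∑ m ∈ S, Multiset.replicate (fwd p m / m) m) + E.val = p.parts
      rw [Multiset.ext]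
      intro x
      rw [hbcount]
      by_cases hxS : x ∈ S
      · rw [if_pos hxS, hfwd_apply, if_pos hxS,
          Nat.mul_div_cancel _ (hSpos x hxS)]
        by_cases hxE : x ∈ E
        · have hc : 1 ≤ p.parts.count x :=
            Multiset.count_pos.2 (Multiset.mem_toFinset.1 (hEsubp p hpm hxE))
          simp only [if_pos hxE]
          omega
        · simp [hxE]
      · rw [if_neg hxS, if_neg (fun h => hxS (hES h))]
        symm
        rw [Multiset.count_eq_zero]
        intro hxp
        by_cases hx2 : x = 2 * r + 2
        · exact hno (hx2 ▸ hxp)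
        · exact hxS (Finset.mem_erase.2 ⟨hx2, hptsub p (Multiset.mem_toFinset.2 hxp)⟩)
    · -- right inverse
      intro l hl
      have hl2 : ∀ m ∈ S, m ∣ l m := (Finset.mem_filter.1 hl).2
      have hlsupp : l.support ⊆ S :=
        (Finset.mem_finsuppAntidiag.1 (Finset.mem_filter.1 hl).1).2
      ext m
      rw [hfwd_apply]
      by_cases hmS : m ∈ S
      · rw [if_pos hmS]
        have hcnt : Multiset.count m
            ((∑ k ∈ S, Multiset.replicate (l k / k) k) + E.val)
            = (if m ∈ S then l m / m else 0) + (if m ∈ E then 1 else 0) := hbcount l m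
        show (Multiset.count m ((∑ k ∈ S, Multiset.replicate (l k / k) k) + E.val)
            - (if m ∈ E then 1 else 0)) * m = l m
        rw [hcnt, if_pos hmS]
        rw [Nat.add_sub_cancel, Nat.div_mul_cancel (hl2 m hmS)]
      · rw [if_neg hmS]
        symm
        by_contra h
        exact hmS (hlsupp (Finsupp.mem_support_iff.2 h))
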